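/- Let S be the 7-element join-semilattice consisting of six pairwise incomparable minimal elements a, b₁, b₂, b₃, b₄, c together with a greatest element 1, where the join of any two distinct minimal elements is 1 (concretely, S may be realized as Option (Fin 6), with `none` the top element, the elements `some i` pairwise incomparable, and some i ⊔ some j = none for i ≠ j; take a = some 0, bᵢ = some i for i = 1,…,4, c = some 5). Let Θ be the smallest reflexive and symmetric relation on S such that 1 Θ x for every x ∈ S, a Θ bᵢ and bᵢ Θ c for i = 1, 2, 3, 4. Then Θ is a tolerance of S (it is compatible with ⊔), but Θ is not representable: there is no reflexive relation R on S compatible with ⊔ such that Θ = R ∘ R⁻¹. -/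

import Mathlib

/-- The join operation of the 7-element semilattice `S = Option (Fin 6)`:
`none` is the top element `1`, and the six elements `some i` are pairwise
incomparable minimal elements whose pairwise joins (for distinct elements)
equal the top. -/
def sup7 : Option (Fin 6) → Option (Fin 6) → Option (Fin 6)
  | some i, some j => if i = j then some i else none
  | _, _ => none

/-- The tolerance on `S = Option (Fin 6)` (with `a = some 0`, `bᵢ = some i`
for `i = 1,…,4`, `c = some 5`, `1 = none`): the smallest reflexive symmetric
relation with `1 Θ x` for all `x`, `a Θ bᵢ` and `bᵢ Θ c` for `i = 1,…,4`. -/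
def Theta7 : Option (Fin 6) → Option (Fin 6) → Prop := fun x y =>
  x = y ∨ x = none ∨ y = none ∨
  ∃ i ∈ ({1, 2, 3, 4} : Set (Fin 6)),
    ({x, y} : Set (Option (Fin 6))) = ({some 0, some i} : Set (Option (Fin 6))) ∨
    ({x, y} : Set (Option (Fin 6))) = ({some i, some 5} : Set (Option (Fin 6)))

/-- A decidable version of `Theta7`. -/
def ThetaD (x y : Option (Fin 6)) : Prop :=
  x = y ∨ x = none ∨ y = none ∨
    ∃ i : Fin 6, (i = 1 ∨ i = 2 ∨ i = 3 ∨ i = 4) ∧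
      (((x = some 0 ∧ y = some i) ∨ (x = some i ∧ y = some 0)) ∨
       ((x = some i ∧ y = some 5) ∨ (x = some 5 ∧ y = some i)))

instance (x y : Option (Fin 6)) : Decidable (ThetaD x y) := by
  unfold ThetaD; infer_instance

lemma theta_iff (x y : Option (Fin 6)) : Theta7 x y ↔ ThetaD x y := by
  simp [Theta7, ThetaD, Set.pair_eq_pair_iff]

/-- `sup7` is a join-semilattice operation on the 7-element set
`Option (Fin 6)`; `Theta7` is a tolerance of this semilattice (reflexive,
symmetric and compatible with the join), but it is not representable: there is
no reflexive relation `R` compatible with the join such that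
`Theta7 = R ∘ R⁻¹`. -/
theorem theta7_not_representable :
    ((∀ x, sup7 x x = x) ∧ (∀ x y, sup7 x y = sup7 y x) ∧
     (∀ x y z, sup7 (sup7 x y) z = sup7 x (sup7 y z))) ∧
    ((∀ x, Theta7 x x) ∧ (∀ x y, Theta7 x y → Theta7 y x) ∧
     (∀ x y x' y', Theta7 x y → Theta7 x' y' →
        Theta7 (sup7 x x') (sup7 y y'))) ∧
    ¬ ∃ R : Option (Fin 6) → Option (Fin 6) → Prop,
        (∀ x, R x x) ∧
        (∀ x y x' y', R x y → R x' y' → R (sup7 x x') (sup7 y y')) ∧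
        (∀ x y, Theta7 x y ↔ ∃ z, R x z ∧ R y z) := by
  refine ⟨by decide, ?_, ?_⟩
  · simp only [theta_iff]
    exact ⟨by decide, by decide, by decide⟩
  rintro ⟨R, hrefl, hcomp, hiff⟩
  -- `R` is contained in `Theta7`
  have hsub : ∀ x y, R x y → Theta7 x y := fun x y h => (hiff x y).2 ⟨y, h, hrefl y⟩
  -- `a Θ c` fails
  have hnotac : ¬ Theta7 (some 0) (some 5) := by rw [theta_iff]; decide
  -- `bᵢ Θ bⱼ` fails for distinct `i, j ∈ {1,2,3,4}`
  have hnotbb : ∀ i j : Fin 6, (i = 1 ∨ i = 2 ∨ i = 3 ∨ i = 4) →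
      (j = 1 ∨ j = 2 ∨ j = 3 ∨ j = 4) → i ≠ j → ¬ Theta7 (some i) (some j) := by
    simp only [theta_iff]; decide
  -- classification of common neighbours of `a` and `bᵢ`
  have hmem : ∀ i : Fin 6, (i = 1 ∨ i = 2 ∨ i = 3 ∨ i = 4) →
      ∀ z, Theta7 (some 0) z → Theta7 (some i) z →
        z = some 0 ∨ z = some i ∨ z = none := by
    simp only [theta_iff]
    intro i hi
    rcases hi with rfl | rfl | rfl | rfl <;> decide
  -- classification of common neighbours of `bᵢ` and `c`
  have hmem' : ∀ i : Fin 6, (i = 1 ∨ i = 2 ∨ i = 3 ∨ i = 4) →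
      ∀ z, Theta7 (some i) z → Theta7 (some 5) z →
        z = some i ∨ z = some 5 ∨ z = none := by
    simp only [theta_iff]; decide
  have hab : ∀ i : Fin 6, (i = 1 ∨ i = 2 ∨ i = 3 ∨ i = 4) → Theta7 (some 0) (some i) := by
    simp only [theta_iff]; decide
  have hbc : ∀ i : Fin 6, (i = 1 ∨ i = 2 ∨ i = 3 ∨ i = 4) → Theta7 (some i) (some 5) := by
    simp only [theta_iff]; decide
  -- For each `i`: either `a R bᵢ`, or `bᵢ R a`, or `a R 1`
  have hAB : ∀ i : Fin 6, (i = 1 ∨ i = 2 ∨ i = 3 ∨ i = 4) →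
      R (some 0) (some i) ∨ R (some i) (some 0) ∨ R (some 0) none := by
    intro i hi
    obtain ⟨z, hz1, hz2⟩ := (hiff (some 0) (some i)).1 (hab i hi)
    rcases hmem i hi z (hsub _ _ hz1) (hsub _ _ hz2) with h | h | h
    · subst h; exact Or.inr (Or.inl hz2)
    · subst h; exact Or.inl hz1
    · subst h; exact Or.inr (Or.inr hz1)
  -- For each `i`: either `bᵢ R c`, or `c R bᵢ`, or `c R 1`
  have hAB' : ∀ i : Fin 6, (i = 1 ∨ i = 2 ∨ i = 3 ∨ i = 4) →
      R (some i) (some 5) ∨ R (some 5) (some i) ∨ R (some 5) none := by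
    intro i hi
    obtain ⟨z, hz1, hz2⟩ := (hiff (some i) (some 5)).1 (hbc i hi)
    rcases hmem' i hi z (hsub _ _ hz1) (hsub _ _ hz2) with h | h | h
    · subst h; exact Or.inr (Or.inl hz2)
    · subst h; exact Or.inl hz1
    · subst h; exact Or.inr (Or.inr hz2)
  -- two distinct `bᵢ R a` is impossible
  have hBuniq : ∀ i j : Fin 6, (i = 1 ∨ i = 2 ∨ i = 3 ∨ i = 4) →
      (j = 1 ∨ j = 2 ∨ j = 3 ∨ j = 4) → i ≠ j →
      R (some i) (some 0) → R (some j) (some 0) → False := by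
    intro i j hi hj hij h1 h2
    exact hnotbb i j hi hj hij ((hiff _ _).2 ⟨some 0, h1, h2⟩)
  -- two distinct `bᵢ R c` is impossible
  have hA'uniq : ∀ i j : Fin 6, (i = 1 ∨ i = 2 ∨ i = 3 ∨ i = 4) →
      (j = 1 ∨ j = 2 ∨ j = 3 ∨ j = 4) → i ≠ j →
      R (some i) (some 5) → R (some j) (some 5) → False := by
    intro i j hi hj hij h1 h2
    exact hnotbb i j hi hj hij ((hiff _ _).2 ⟨some 5, h1, h2⟩)
  -- two distinct `a R bᵢ` give `a R 1`
  have hAclose : ∀ i j : Fin 6, i ≠ j →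
      R (some 0) (some i) → R (some 0) (some j) → R (some 0) none := by
    intro i j hij h1 h2
    have := hcomp _ _ _ _ h1 h2
    simpa [sup7, hij] using this
  -- two distinct `c R bᵢ` give `c R 1`
  have hB'close : ∀ i j : Fin 6, i ≠ j →
      R (some 5) (some i) → R (some 5) (some j) → R (some 5) none := by
    intro i j hij h1 h2
    have := hcomp _ _ _ _ h1 h2
    simpa [sup7, hij] using this
  -- First conclusion: `a R 1`
  have goal1 : R (some 0) none := by
    rcases hAB 1 (by decide) with h1 | h1 | h1
    · rcases hAB 2 (by decide) with h2 | h2 | h2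
      · exact hAclose 1 2 (by decide) h1 h2
      · rcases hAB 3 (by decide) with h3 | h3 | h3
        · exact hAclose 1 3 (by decide) h1 h3
        · exact (hBuniq 2 3 (by decide) (by decide) (by decide) h2 h3).elim
        · exact h3
      · exact h2
    · rcases hAB 2 (by decide) with h2 | h2 | h2
      · rcases hAB 3 (by decide) with h3 | h3 | h3
        · exact hAclose 2 3 (by decide) h2 h3
        · exact (hBuniq 1 3 (by decide) (by decide) (by decide) h1 h3).elim
        · exact h3
      · exact (hBuniq 1 2 (by decide) (by decide) (by decide) h1 h2).elim
      · exact h2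
    · exact h1
  -- Second conclusion: `c R 1`
  have goal2 : R (some 5) none := by
    rcases hAB' 1 (by decide) with h1 | h1 | h1
    · rcases hAB' 2 (by decide) with h2 | h2 | h2
      · exact (hA'uniq 1 2 (by decide) (by decide) (by decide) h1 h2).elim
      · rcases hAB' 3 (by decide) with h3 | h3 | h3
        · exact (hA'uniq 1 3 (by decide) (by decide) (by decide) h1 h3).elim
        · exact hB'close 2 3 (by decide) h2 h3
        · exact h3
      · exact h2
    · rcases hAB' 2 (by decide) with h2 | h2 | h2
      · rcases hAB' 3 (by decide) with h3 | h3 | h3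
        · exact (hA'uniq 2 3 (by decide) (by decide) (by decide) h2 h3).elim
        · exact hB'close 1 3 (by decide) h1 h3
        · exact h3
      · exact hB'close 1 2 (by decide) h1 h2
      · exact h2
    · exact h1
  -- `a R 1` and `c R 1` give `a Θ c`, a contradiction
  exact hnotac ((hiff _ _).2 ⟨none, goal1, goal2⟩)
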